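/- π(P □ P) ≥ 4, where P □ P is the infinite grid ℤ² with (a,b) ~ (c,d) iff |a−c| + |b−d| = 1. -/

import Mathlib

/-- A coloring `f` of the vertices of `G` is *non-repetitive* if no path
(walk with distinct vertices) has a color sequence of the form `w ++ w`
with `w` nonempty. -/
def NonRepetitive {V α : Type*} (G : SimpleGraph V) (f : V → α) : Prop :=
  ∀ ⦃u v : V⦄ (p : G.Walk u v), p.IsPath →
    ∀ w : List α, w ≠ [] → p.support.map f ≠ w ++ w

/-- The infinite grid `P □ P`: the graph on `ℤ × ℤ` where
`(a, b) ~ (c, d)` iff `|a - c| + |b - d| = 1`. -/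
def grid : SimpleGraph (ℤ × ℤ) :=
  SimpleGraph.fromRel (fun p q => |p.1 - q.1| + |p.2 - q.2| = 1)

/-! ### A finite search: every ternary word of length 10 has a cyclic square -/

def dgt (l : List ℕ) (i : ℕ) : ℕ := l.getD i 0

def sqr (l : List ℕ) (s k : ℕ) : Bool :=
  (List.range k).all (fun i => dgt l ((s+i)%10) == dgt l ((s+k+i)%10))

def chk (l : List ℕ) : Bool :=
  (List.range 10).any fun s => (List.range 5).any fun k => sqr l s (k+1)

def newsq (l : List ℕ) : Bool :=
  (List.range 5).any fun k =>
    decide (2*(k+1) ≤ l.length) && (List.range (k+1)).all fun i => dgt l i == dgt l (k+1+i)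

def gen : ℕ → List ℕ → Bool
  | 0, l => chk l
  | m+1, l => newsq l || (gen m (0::l) && gen m (1::l) && gen m (2::l))

theorem gen10 : gen 10 [] = true := by decide

theorem chk_iff {l : List ℕ} : chk l = true ↔
    ∃ s, s < 10 ∧ ∃ k, k < 5 ∧ ∀ i, i < k+1 →
      dgt l ((s+i)%10) = dgt l ((s+(k+1)+i)%10) := by
  simp [chk, sqr, List.any_eq_true, List.all_eq_true, List.mem_range, beq_iff_eq]

theorem newsq_iff {l : List ℕ} : newsq l = true ↔
    ∃ k, k < 5 ∧ 2*(k+1) ≤ l.length ∧ ∀ i, i < k+1 → dgt l i = dgt l (k+1+i) := by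
  simp [newsq, List.any_eq_true, List.all_eq_true, List.mem_range, beq_iff_eq]

theorem chk_of_newsq (t l : List ℕ) (hlen : (t ++ l).length = 10)
    (hn : newsq l = true) : chk (t ++ l) = true := by
  rw [newsq_iff] at hn
  obtain ⟨k, hk5, hkl, hsq⟩ := hn
  rw [List.length_append] at hlen
  rw [chk_iff]
  refine ⟨t.length, by omega, k, hk5, ?_⟩
  intro i hi
  rw [Nat.mod_eq_of_lt (by omega), Nat.mod_eq_of_lt (by omega)]
  have e1 : dgt (t ++ l) (t.length + i) = dgt l i := by
    unfold dgt
    rw [List.getD_append_right _ _ _ _ (by omega)]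
    congr 1; omega
  have e2 : dgt (t ++ l) (t.length + (k+1) + i) = dgt l ((k+1) + i) := by
    unfold dgt
    rw [List.getD_append_right _ _ _ _ (by omega)]
    congr 1; omega
  rw [e1, e2]
  exact hsq i hi

theorem gen_spec : ∀ m l, gen m l = true → ∀ l' : List ℕ, l'.length = m →
    (∀ c ∈ l', c < 3) → (l' ++ l).length = 10 → chk (l' ++ l) = true := by
  intro m
  induction m with
  | zero =>
    intro l hg l' hl' _ _
    rw [List.length_eq_zero_iff] at hl'
    subst hl'
    simpa [gen] using hg
  | succ m ih =>
    intro l hg l' hl' h3 hlen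
    rw [gen, Bool.or_eq_true, Bool.and_eq_true, Bool.and_eq_true] at hg
    rcases hg with hn | ⟨⟨h0, h1⟩, h2⟩
    · exact chk_of_newsq l' l hlen hn
    · have hne : l' ≠ [] := by intro h; simp [h] at hl'
      rcases List.eq_nil_or_concat l' with h | ⟨t, c, rfl⟩
      · exact absurd h hne
      · simp only [List.concat_eq_append] at hl' h3 hlen ⊢
        have htlen : t.length = m := by
          simp [List.length_append] at hl'; omega
        have hc : c < 3 := h3 c (by simp)
        have h3' : ∀ x ∈ t, x < 3 := fun x hx => h3 x (by simp [hx])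
        have hassoc : t ++ [c] ++ l = t ++ (c :: l) := by simp
        rw [hassoc] at hlen ⊢
        interval_cases c
        · exact ih (0::l) h0 t htlen h3' hlen
        · exact ih (1::l) h1 t htlen h3' hlen
        · exact ih (2::l) h2 t htlen h3' hlen

theorem chk_complete (d : List ℕ) (hlen : d.length = 10) (h3 : ∀ c ∈ d, c < 3) :
    chk d = true := by
  have := gen_spec 10 [] gen10 d hlen h3 (by simp [hlen])
  simpa using this

/-! ### The 10-cycle in the grid -/

def cyc (n : ℕ) : ℤ × ℤ :=
  match n % 10 with
  | 0 => (0,0) | 1 => (1,0) | 2 => (2,0) | 3 => (3,0) | 4 => (4,0)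
  | 5 => (4,1) | 6 => (3,1) | 7 => (2,1) | 8 => (1,1) | _ => (0,1)

theorem cyc_mod (n : ℕ) : cyc (n % 10) = cyc n := by
  unfold cyc
  congr 1
  omega

theorem cyc_step : ∀ m, m < 10 → grid.Adj (cyc m) (cyc (m+1)) := by
  intro m hm
  interval_cases m <;>
    · unfold grid
      rw [SimpleGraph.fromRel_adj]
      exact ⟨by decide, by decide⟩

theorem cyc_adj (n : ℕ) : grid.Adj (cyc n) (cyc (n+1)) := by
  have h1 : cyc n = cyc (n % 10) := (cyc_mod n).symm
  have h2 : cyc (n+1) = cyc (n % 10 + 1) := by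
    rw [← cyc_mod (n+1), ← cyc_mod (n % 10 + 1)]
    congr 1
    omega
  rw [h1, h2]
  exact cyc_step (n % 10) (Nat.mod_lt _ (by norm_num))

theorem cyc_inj : ∀ a, a < 10 → ∀ b, b < 10 → cyc a = cyc b → a = b := by decide

/-- The walk along the cycle from `cyc s` through `m` steps. -/
def arcWalk (s : ℕ) : (m : ℕ) → grid.Walk (cyc s) (cyc (s + m))
  | 0 => SimpleGraph.Walk.nil
  | m+1 => (arcWalk s m).concat (cyc_adj (s+m))

theorem arcWalk_support (s m : ℕ) :
    (arcWalk s m).support = (List.range (m+1)).map (fun i => cyc (s+i)) := by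
  induction m with
  | zero => simp [arcWalk, List.range_succ]
  | succ m ih =>
    rw [arcWalk, SimpleGraph.Walk.support_concat, ih]
    simp [List.range_succ]

theorem arcWalk_isPath (s m : ℕ) (hm : m < 10) : (arcWalk s m).IsPath := by
  rw [SimpleGraph.Walk.isPath_def, arcWalk_support]
  refine List.Nodup.map_on ?_ List.nodup_range
  intro x hx y hy hxy
  rw [List.mem_range] at hx hy
  have e1 : cyc ((s+x) % 10) = cyc ((s+y) % 10) := by
    rw [cyc_mod, cyc_mod]; exact hxy
  have := cyc_inj _ (Nat.mod_lt _ (by norm_num)) _ (Nat.mod_lt _ (by norm_num)) e1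
  omega

/-! ### Main theorem -/

/-- Every `3`-coloring of the infinite grid `P □ P` admits a repetitively
colored path; hence `π(P □ P) ≥ 4`. -/
theorem pi_grid_ge_four :
    ∀ f : ℤ × ℤ → Fin 3, ¬ NonRepetitive grid f := by
  intro f hf
  set d : List ℕ := (List.range 10).map (fun j => (f (cyc j)).val) with hd
  have hlen : d.length = 10 := by simp [hd]
  have h3 : ∀ c ∈ d, c < 3 := by
    intro c hc
    rw [hd, List.mem_map] at hc
    obtain ⟨j, _, rfl⟩ := hc
    exact (f (cyc j)).isLt
  have hchk := chk_complete d hlen h3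
  rw [chk_iff] at hchk
  obtain ⟨s, hs, k, hk, hsq⟩ := hchk
  have hdg : ∀ r : ℕ, dgt d (r % 10) = (f (cyc r)).val := by
    intro r
    have hr : r % 10 < 10 := Nat.mod_lt _ (by norm_num)
    rw [hd]
    unfold dgt
    rw [List.getD_eq_getElem?_getD, List.getElem?_map, List.getElem?_range hr]
    simp [cyc_mod r]
  have hcol : ∀ i, i < k+1 → f (cyc (s + (k+1) + i)) = f (cyc (s+i)) := by
    intro i hi
    have h := hsq i hi
    rw [hdg (s+i), hdg (s+(k+1)+i)] at h
    exact (Fin.val_injective h).symm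
  -- the repetitively colored path
  have hpath := arcWalk_isPath s (2*k+1) (by omega)
  set w : List (Fin 3) := (List.range (k+1)).map (fun i => f (cyc (s+i))) with hw
  have hwne : w ≠ [] := by simp [hw]
  refine hf (arcWalk s (2*k+1)) hpath w hwne ?_
  rw [arcWalk_support, List.map_map]
  have h2k : 2*k+1+1 = (k+1) + (k+1) := by omega
  rw [h2k, List.range_add, List.map_append, List.map_map]
  congr 1
  rw [hw]
  refine List.map_congr_left ?_
  intro i hi
  rw [List.mem_range] at hi
  show f (cyc (s + ((k+1) + i))) = f (cyc (s+i))
  rw [show s + ((k+1) + i) = s + (k+1) + i by omega]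
  exact hcol i hi
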